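/- If B and B' are maximal cubes of an ample concept class C (maximal under inclusion among cubes of C) and B and B' have the same support, then B = B'. -/

import Mathlib

variable {X : Type} [Fintype X] [DecidableEq X]

/-- Hamming distance between two subsets of `X` (size of symmetric difference). -/
def hdist (c c' : Finset X) : ℕ := ((c \ c') ∪ (c' \ c)).card

/-- The restriction `C|Y = {c ∩ Y : c ∈ C}`. -/
def restrictTo (C : Finset (Finset X)) (Y : Finset X) : Finset (Finset X) :=
  C.image (· ∩ Y)

/-- `Y` is shattered by `C`, i.e. `C|Y = 2^Y`. -/
def Shatters (C : Finset (Finset X)) (Y : Finset X) : Prop :=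
  ∀ s ∈ Y.powerset, ∃ c ∈ C, c ∩ Y = s

instance (C : Finset (Finset X)) : DecidablePred (Shatters C) := fun _ => by
  unfold Shatters; infer_instance

/-- The family `X̄(C)` of all sets shattered by `C`. -/
def shatteredSets (C : Finset (Finset X)) : Finset (Finset X) :=
  Finset.univ.filter (Shatters C)

/-- The VC dimension of `C`: maximum size of a shattered set. -/
def vcDim (C : Finset (Finset X)) : ℕ := (shatteredSets C).sup Finset.card

/-- `C` is ample: `|C| = |X̄(C)|`. -/
def IsAmple (C : Finset (Finset X)) : Prop := C.card = (shatteredSets C).card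

/-- `C` is a maximum class of VC dimension `d`. -/
def IsMaximumClass (C : Finset (Finset X)) (d : ℕ) : Prop :=
  vcDim C = d ∧ C.card = ∑ i ∈ Finset.range (d + 1), (Fintype.card X).choose i

/-- `B` is a cube with support `Y`: `B = {t ∪ s : s ⊆ Y}` for some `t ⊆ X \ Y`. -/
def IsCubeS (B : Finset (Finset X)) (Y : Finset X) : Prop :=
  ∃ t : Finset X, t ∩ Y = ∅ ∧ B = Y.powerset.image (fun s => t ∪ s)

/-- `B` is a cube. -/
def IsCube (B : Finset (Finset X)) : Prop := ∃ Y, IsCubeS B Y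

/-- `B` is a cube of `C`: a cube contained in `C`. -/
def IsCubeOf (C B : Finset (Finset X)) : Prop := B ⊆ C ∧ IsCube B

/-- `B` is a maximal cube of `C` (maximal under inclusion among cubes of `C`). -/
def IsMaximalCubeOf (C B : Finset (Finset X)) : Prop :=
  IsCubeOf C B ∧ ∀ B', IsCubeOf C B' → B ⊆ B' → B = B'

/-- `c` is a corner of `C`: a concept of `C` belonging to a unique maximal cube of `C`. -/
def IsCornerOf (C : Finset (Finset X)) (c : Finset X) : Prop :=
  c ∈ C ∧ ∃! B, IsMaximalCubeOf C B ∧ c ∈ B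

/-- The one-inclusion graph `G(C)`. -/
def oneInclusionGraph (C : Finset (Finset X)) : SimpleGraph {c : Finset X // c ∈ C} where
  Adj c c' := hdist c.1 c'.1 = 1
  symm := by
    refine ⟨?_⟩
    intro a b h
    simpa [hdist, Finset.union_comm] using h
  loopless := by
    refine ⟨?_⟩
    intro a h
    simp [hdist] at h

/-- `C` is isometric: `G(C)` is connected and graph distances equal Hamming distances. -/
def IsIsometric (C : Finset (Finset X)) : Prop :=
  (oneInclusionGraph C).Connected ∧
  ∀ c c' : {c : Finset X // c ∈ C}, (oneInclusionGraph C).dist c c' = hdist c.1 c'.1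

/-- `C` is weakly isometric: `G(C)` is connected and graph distances equal Hamming
distances for pairs at Hamming distance at most 2. -/
def IsWeaklyIsometric (C : Finset (Finset X)) : Prop :=
  (oneInclusionGraph C).Connected ∧
  ∀ c c' : {c : Finset X // c ∈ C}, hdist c.1 c'.1 ≤ 2 →
    (oneInclusionGraph C).dist c c' = hdist c.1 c'.1

/-- A list of concepts is a corner peeling if it has no duplicates and each element is a
corner of the corresponding level set. -/
def IsCornerPeeling (l : List (Finset X)) : Prop :=
  l.Nodup ∧ ∀ i (h : i < l.length), IsCornerOf ((l.take (i + 1)).toFinset) (l.get ⟨i, h⟩)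

/-- `C` is dismantlable: it admits a corner peeling ordering of all its concepts. -/
def Dismantlable (C : Finset (Finset X)) : Prop :=
  ∃ l : List (Finset X), l.toFinset = C ∧ IsCornerPeeling l

/-- Non-clashing condition for a map `r`. -/
def NonClashing (C : Finset (Finset X)) (r : Finset X → Finset X) : Prop :=
  ∀ c ∈ C, ∀ c' ∈ C, c ≠ c' → c ∩ (r c ∪ r c') ≠ c' ∩ (r c ∪ r c')

/-- `r` is a representation map for `C`: a non-clashing bijection from `C` onto `X̄(C)`. -/
def IsRepMap (C : Finset (Finset X)) (r : Finset X → Finset X) : Prop :=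
  (∀ c ∈ C, r c ∈ shatteredSets C) ∧
  Set.InjOn r ↑C ∧
  (∀ Y ∈ shatteredSets C, ∃ c ∈ C, r c = Y) ∧
  NonClashing C r

/-- `C` admits an unlabeled sample compression scheme of size `k`. -/
def HasUSCS (C : Finset (Finset X)) (k : ℕ) : Prop :=
  ∃ (α : Finset X → Finset X → Finset X) (β : Finset X → Finset X),
    ∀ (Y : Finset X), ∀ c ∈ C,
      α Y (c ∩ Y) ⊆ Y ∧ (α Y (c ∩ Y)).card ≤ k ∧
      β (α Y (c ∩ Y)) ∈ C ∧ β (α Y (c ∩ Y)) ∩ Y = c ∩ Y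

/-- The cube of `2^X` with support `Y` containing `c`. -/
def cubeAt (c Y : Finset X) : Finset (Finset X) :=
  Y.powerset.image (fun s => (c \ Y) ∪ s)

/-- Condition (C1): for every `c ∈ C`, the cube with support `r c` containing `c`
is a cube of `C`. -/
def CondC1 (C : Finset (Finset X)) (r : Finset X → Finset X) : Prop :=
  ∀ c ∈ C, cubeAt c (r c) ⊆ C

/-- Condition (C2): every cube of `C` has a unique concept `c` with `r c ∩ supp B = ∅`. -/
def CondC2 (C : Finset (Finset X)) (r : Finset X → Finset X) : Prop :=
  ∀ B Y, B ⊆ C → IsCubeS B Y → ∃! c, c ∈ B ∧ r c ∩ Y = ∅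

/-- The facet of the cross-polytope corresponding to a subset `c ⊆ X`:
`+x ∈ σ_c` iff `x ∈ c` (where `+x = Sum.inl x` and `-x = Sum.inr x`). -/
def facet (c : Finset X) : Finset (X ⊕ X) :=
  c.image Sum.inl ∪ (Finset.univ \ c).image Sum.inr

/-- A list of facets of the cross-polytope is a partial shelling. -/
def IsPartialShelling (L : List (Finset (X ⊕ X))) : Prop :=
  L.Nodup ∧ ∀ i j, i < j → j < L.length →
    ∃ k < j, ((L.getD k ∅) ∩ (L.getD j ∅)).card = Fintype.card X - 1 ∧
      (L.getD i ∅) ∩ (L.getD j ∅) ⊆ (L.getD k ∅) ∩ (L.getD j ∅)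

/-- `Q` is an incomplete cube for `(C, D)` with support `σ`: a cube of `C` whose
support `σ` is a missed simplex (shattered by `C` but not by `D`). -/
def IsIncompleteCube (C D Q : Finset (Finset X)) (σ : Finset X) : Prop :=
  Q ⊆ C ∧ IsCubeS Q σ ∧ Shatters C σ ∧ ¬ Shatters D σ

/-- `c` is the source of the incomplete cube `Q` with support `σ`:
`c ∈ Q` and `c ∩ σ ∉ D|σ`. -/
def IsSource (D Q : Finset (Finset X)) (σ : Finset X) (c : Finset X) : Prop :=
  c ∈ Q ∧ c ∩ σ ∉ restrictTo D σ

/-- The restriction `C_x = C|(X \ {x})`, with concepts viewed as subsets of `X`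
avoiding `x`. -/
def restrictX (C : Finset (Finset X)) (x : X) : Finset (Finset X) :=
  C.image (·.erase x)

/-- The reduction `C^x = {c ⊆ X \ {x} : c ∈ C and c ∪ {x} ∈ C}`. -/
def reduction (C : Finset (Finset X)) (x : X) : Finset (Finset X) :=
  C.filter (fun c => x ∉ c ∧ insert x c ∈ C)

/-- The interval `B(c,c') = {t : d(c,t) + d(t,c') = d(c,c')}`. -/
def interval (c c' : Finset X) : Finset (Finset X) :=
  Finset.univ.filter (fun t => hdist c t + hdist t c' = hdist c c')

/-- `C'` is convex in `C`. -/
def IsConvexIn (C C' : Finset (Finset X)) : Prop :=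
  ∀ c ∈ C', ∀ c'' ∈ C', interval c c'' ∩ C ⊆ C'

/-- `C'` is locally convex in `C`. -/
def IsLocallyConvexIn (C C' : Finset (Finset X)) : Prop :=
  ∀ c ∈ C', ∀ c'' ∈ C', hdist c c'' = 2 → interval c c'' ∩ C ⊆ C'

/-- `C` is a conditional antimatroid: contains `∅`, closed under intersection, and
every concept is generated by its extremal points. -/
def IsCondAntimatroid (C : Finset (Finset X)) : Prop :=
  ∅ ∈ C ∧ (∀ c ∈ C, ∀ c' ∈ C, c ∩ c' ∈ C) ∧
  ∀ c ∈ C, ∀ c' ∈ C, (c.filter (fun x => c.erase x ∈ C)) ⊆ c' → c ⊆ c'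

section AmpAux



lemma amp_mem_shattered {C : Finset (Finset X)} {Y : Finset X} :
    Y ∈ shatteredSets C ↔ Shatters C Y := by
  simp [shatteredSets]

lemma amp_shatters_mono {C C' : Finset (Finset X)} (h : C' ⊆ C) {Y : Finset X}
    (hY : Shatters C' Y) : Shatters C Y := by
  intro s hs
  obtain ⟨c, hc, hcs⟩ := hY s hs
  exact ⟨c, h hc, hcs⟩

lemma amp_shatters_empty {C : Finset (Finset X)} {c : Finset X} (hc : c ∈ C) :
    Shatters C ∅ := by
  intro s hs
  simp only [Finset.powerset_empty, Finset.mem_singleton] at hs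
  subst hs
  exact ⟨c, hc, by simp⟩

lemma amp_not_mem_of_shatters_out {C : Finset (Finset X)} {x : X} {Y : Finset X}
    (h : Shatters (C.filter (fun c => x ∉ c)) Y) : x ∉ Y := by
  intro hx
  obtain ⟨c, hc, hcY⟩ := h Y (Finset.mem_powerset_self Y)
  simp only [Finset.mem_filter] at hc
  have : x ∈ c ∩ Y := by rw [hcY]; exact hx
  exact hc.2 (Finset.mem_inter.1 this).1

lemma amp_not_mem_of_shatters_in {C : Finset (Finset X)} {x : X} {Y : Finset X}
    (h : Shatters (C.filter (fun c => x ∈ c)) Y) : x ∉ Y := by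
  intro hx
  obtain ⟨c, hc, hcY⟩ := h ∅ (Finset.empty_mem_powerset Y)
  simp only [Finset.mem_filter] at hc
  have : x ∈ c ∩ Y := Finset.mem_inter.2 ⟨hc.2, hx⟩
  rw [hcY] at this
  exact absurd this (Finset.notMem_empty x)

lemma amp_insert_shatters {C : Finset (Finset X)} {x : X} {Y : Finset X}
    (hxY : x ∉ Y)
    (h0 : ∀ s ⊆ Y, ∃ c, (c ∈ C ∧ x ∉ c) ∧ c ∩ Y = s)
    (h1 : ∀ s ⊆ Y, ∃ c, (c ∈ C ∧ x ∈ c) ∧ c ∩ Y = s) :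
    Shatters C (insert x Y) := by
  intro s hs
  rw [Finset.mem_powerset] at hs
  by_cases hxs : x ∈ s
  · have hsY : s.erase x ⊆ Y := by
      intro z hz
      rw [Finset.mem_erase] at hz
      rcases Finset.mem_insert.1 (hs hz.2) with h | h
      · exact absurd h hz.1
      · exact h
    obtain ⟨c, ⟨hcC, hxc⟩, hcY⟩ := h1 (s.erase x) hsY
    refine ⟨c, hcC, ?_⟩
    ext z
    simp only [Finset.mem_inter, Finset.mem_insert]
    constructor
    · rintro ⟨hzc, (rfl | hzY)⟩
      · exact hxs
      · have : z ∈ c ∩ Y := Finset.mem_inter.2 ⟨hzc, hzY⟩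
        rw [hcY] at this
        exact (Finset.mem_erase.1 this).2
    · intro hzs
      by_cases hzx : z = x
      · subst hzx; exact ⟨hxc, Or.inl rfl⟩
      · have : z ∈ s.erase x := Finset.mem_erase.2 ⟨hzx, hzs⟩
        rw [← hcY] at this
        rcases Finset.mem_inter.1 this with ⟨h1', h2'⟩
        exact ⟨h1', Or.inr h2'⟩
  · have hsY : s ⊆ Y := by
      intro z hz
      rcases Finset.mem_insert.1 (hs hz) with h | h
      · subst h; exact absurd hz hxs
      · exact h
    obtain ⟨c, ⟨hcC, hxc⟩, hcY⟩ := h0 s hsY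
    refine ⟨c, hcC, ?_⟩
    rw [← hcY]
    ext z
    simp only [Finset.mem_inter, Finset.mem_insert]
    constructor
    · rintro ⟨hzc, (rfl | hzY)⟩
      · exact absurd hzc hxc
      · exact ⟨hzc, hzY⟩
    · rintro ⟨hzc, hzY⟩
      exact ⟨hzc, Or.inr hzY⟩

lemma amp_key_count (C : Finset (Finset X)) (x : X) :
    (shatteredSets (C.filter (fun c => x ∉ c))).card
      + (shatteredSets (C.filter (fun c => x ∈ c))).card ≤ (shatteredSets C).card := by
  set A := shatteredSets (C.filter (fun c => x ∉ c)) with hA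
  set B := shatteredSets (C.filter (fun c => x ∈ c)) with hB
  have hAx : ∀ Y ∈ A, x ∉ Y := fun Y hY =>
    amp_not_mem_of_shatters_out (amp_mem_shattered.1 hY)
  have hBx : ∀ Y ∈ B, x ∉ Y := fun Y hY =>
    amp_not_mem_of_shatters_in (amp_mem_shattered.1 hY)
  have hAC : A ⊆ shatteredSets C := fun Y hY =>
    amp_mem_shattered.2 (amp_shatters_mono (Finset.filter_subset _ _) (amp_mem_shattered.1 hY))
  have hBC : B ⊆ shatteredSets C := fun Y hY =>
    amp_mem_shattered.2 (amp_shatters_mono (Finset.filter_subset _ _) (amp_mem_shattered.1 hY))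
  set J := (A ∩ B).image (insert x) with hJ
  have hJC : J ⊆ shatteredSets C := by
    intro Y hY
    obtain ⟨Z, hZ, rfl⟩ := Finset.mem_image.1 hY
    rcases Finset.mem_inter.1 hZ with ⟨hZA, hZB⟩
    have hxZ : x ∉ Z := hAx Z hZA
    refine amp_mem_shattered.2 (amp_insert_shatters hxZ ?_ ?_)
    · intro s hsub
      obtain ⟨c, hc, hcs⟩ := (amp_mem_shattered.1 hZA) s (Finset.mem_powerset.2 hsub)
      simp only [Finset.mem_filter] at hc
      exact ⟨c, hc, hcs⟩
    · intro s hsub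
      obtain ⟨c, hc, hcs⟩ := (amp_mem_shattered.1 hZB) s (Finset.mem_powerset.2 hsub)
      simp only [Finset.mem_filter] at hc
      exact ⟨c, hc, hcs⟩
  have hdisj : Disjoint (A ∪ B) J := by
    rw [Finset.disjoint_right]
    intro Y hYJ hYU
    obtain ⟨Z, _, rfl⟩ := Finset.mem_image.1 hYJ
    rcases Finset.mem_union.1 hYU with h | h
    · exact hAx _ h (Finset.mem_insert_self x Z)
    · exact hBx _ h (Finset.mem_insert_self x Z)
  have hinj : J.card = (A ∩ B).card := by
    apply Finset.card_image_of_injOn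
    intro Y hY Y' hY' hins
    have hxY : x ∉ Y := hAx Y (Finset.mem_inter.1 hY).1
    have hxY' : x ∉ Y' := hAx Y' (Finset.mem_inter.1 hY').1
    rw [← Finset.erase_insert hxY, ← Finset.erase_insert hxY', hins]
  calc A.card + B.card = (A ∪ B).card + (A ∩ B).card :=
        (Finset.card_union_add_card_inter A B).symm
    _ = ((A ∪ B) ∪ J).card := by
        rw [Finset.card_union_of_disjoint hdisj, hinj]
    _ ≤ (shatteredSets C).card :=
        Finset.card_le_card (Finset.union_subset (Finset.union_subset hAC hBC) hJC)

lemma amp_symmdiff_nonempty {c c' : Finset X} (h : c ≠ c') :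
    ((c \ c') ∪ (c' \ c)).Nonempty := by
  rw [Finset.nonempty_iff_ne_empty]
  intro he
  rcases Finset.union_eq_empty.1 he with ⟨h1, h2⟩
  exact h (Finset.Subset.antisymm (Finset.sdiff_eq_empty_iff_subset.1 h1)
    (Finset.sdiff_eq_empty_iff_subset.1 h2))

lemma amp_hdist_eq_zero {c c' : Finset X} (h : hdist c c' = 0) : c = c' := by
  rw [hdist, Finset.card_eq_zero] at h
  rcases Finset.union_eq_empty.1 h with ⟨h1, h2⟩
  exact Finset.Subset.antisymm (Finset.sdiff_eq_empty_iff_subset.1 h1)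
    (Finset.sdiff_eq_empty_iff_subset.1 h2)

lemma amp_pajor_aux : ∀ n (C : Finset (Finset X)), C.card ≤ n →
    C.card ≤ (shatteredSets C).card := by
  intro n
  induction n with
  | zero => intro C hC; omega
  | succ n ih =>
    intro C hC
    by_cases hex : ∃ c ∈ C, ∃ c' ∈ C, c ≠ c'
    · obtain ⟨c, hc, c', hc', hne⟩ := hex
      obtain ⟨x, hx⟩ := amp_symmdiff_nonempty hne
      have hsplit : (C.filter (fun c => x ∈ c)).card
          + (C.filter (fun c => x ∉ c)).card = C.card :=
        Finset.card_filter_add_card_filter_not _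
      have h0lt : (C.filter (fun c => x ∉ c)).card < C.card := by
        apply Finset.card_lt_card
        rw [Finset.ssubset_iff_of_subset (Finset.filter_subset _ _)]
        rcases Finset.mem_union.1 hx with h | h
        · exact ⟨c, hc, by simp [Finset.mem_filter, (Finset.mem_sdiff.1 h).1]⟩
        · exact ⟨c', hc', by simp [Finset.mem_filter, (Finset.mem_sdiff.1 h).1]⟩
      have h1lt : (C.filter (fun c => x ∈ c)).card < C.card := by
        apply Finset.card_lt_card
        rw [Finset.ssubset_iff_of_subset (Finset.filter_subset _ _)]
        rcases Finset.mem_union.1 hx with h | h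
        · exact ⟨c', hc', by simp [Finset.mem_filter, (Finset.mem_sdiff.1 h).2]⟩
        · exact ⟨c, hc, by simp [Finset.mem_filter, (Finset.mem_sdiff.1 h).2]⟩
      have i0 := ih (C.filter (fun c => x ∉ c)) (by omega)
      have i1 := ih (C.filter (fun c => x ∈ c)) (by omega)
      have hk := amp_key_count C x
      omega
    · push_neg at hex
      have hcard : C.card ≤ 1 := Finset.card_le_one.2 fun a ha b hb => hex a ha b hb
      rcases C.eq_empty_or_nonempty with rfl | ⟨c, hc⟩
      · simp
      · have : ∅ ∈ shatteredSets C := amp_mem_shattered.2 (amp_shatters_empty hc)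
        have := Finset.card_pos.2 ⟨∅, this⟩
        omega

lemma amp_pajor (C : Finset (Finset X)) : C.card ≤ (shatteredSets C).card :=
  amp_pajor_aux C.card C le_rfl

lemma amp_half_ample {C : Finset (Finset X)} (hC : IsAmple C) (x : X) :
    IsAmple (C.filter (fun c => x ∉ c)) ∧ IsAmple (C.filter (fun c => x ∈ c)) := by
  have h0 := amp_pajor (C.filter (fun c => x ∉ c))
  have h1 := amp_pajor (C.filter (fun c => x ∈ c))
  have hk := amp_key_count C x
  have hsplit : (C.filter (fun c => x ∈ c)).card
      + (C.filter (fun c => x ∉ c)).card = C.card :=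
    Finset.card_filter_add_card_filter_not _
  unfold IsAmple at hC ⊢
  omega

lemma amp_half_ample' {C : Finset (Finset X)} (hC : IsAmple C) (x : X) (b : Prop)
    [Decidable b] : IsAmple (C.filter (fun c => x ∈ c ↔ b)) := by
  by_cases hb : b
  · have : C.filter (fun c => x ∈ c ↔ b) = C.filter (fun c => x ∈ c) := by
      apply Finset.filter_congr
      intro c _
      simp [hb]
    rw [this]
    exact (amp_half_ample hC x).2
  · have : C.filter (fun c => x ∈ c ↔ b) = C.filter (fun c => x ∉ c) := by
      apply Finset.filter_congr
      intro c _
      simp [hb]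
    rw [this]
    exact (amp_half_ample hC x).1

lemma amp_symmdiff_cancel {c w c' : Finset X}
    (h : (c \ w) ∪ (w \ c) = (c \ c') ∪ (c' \ c)) : w = c' := by
  ext z
  have hz := Finset.ext_iff.1 h z
  simp only [Finset.mem_union, Finset.mem_sdiff] at hz
  by_cases hzc : z ∈ c <;> tauto

lemma amp_step_aux : ∀ n (C : Finset (Finset X)), C.card ≤ n → IsAmple C →
    ∀ c ∈ C, ∀ c' ∈ C, 2 ≤ hdist c c' →
    ∃ w ∈ C, w ≠ c ∧ hdist c w < hdist c c' := by
  intro n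
  induction n with
  | zero =>
    intro C hC _ c hc
    rw [Nat.le_zero, Finset.card_eq_zero] at hC
    subst hC
    exact absurd hc (Finset.notMem_empty c)
  | succ n ih =>
    intro C hcard hC c hc c' hc' hd
    set Δ := (c \ c') ∪ (c' \ c) with hΔ
    by_cases hcase : ∀ d ∈ C, ∀ z, z ∉ Δ → (z ∈ d ↔ z ∈ c)
    · -- C is confined to the cube spanned by c, c'
      set T := insert (∅ : Finset X) (Δ.image (fun z => ({z} : Finset X))) with hT
      have hTsub : T ⊆ shatteredSets C := by
        intro Y hY
        rcases Finset.mem_insert.1 hY with rfl | hY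
        · exact amp_mem_shattered.2 (amp_shatters_empty hc)
        · obtain ⟨z, hz, rfl⟩ := Finset.mem_image.1 hY
          refine amp_mem_shattered.2 ?_
          intro s hs
          rw [Finset.mem_powerset, Finset.subset_singleton_iff] at hs
          have hzmem : (z ∈ c ∧ z ∉ c') ∨ (z ∈ c' ∧ z ∉ c) := by
            rcases Finset.mem_union.1 hz with h | h
            · exact Or.inl (Finset.mem_sdiff.1 h)
            · exact Or.inr ⟨(Finset.mem_sdiff.1 h).1, (Finset.mem_sdiff.1 h).2⟩
          rcases hs with rfl | rfl
          · rcases hzmem with ⟨_, h2⟩ | ⟨_, h2⟩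
            · exact ⟨c', hc', Finset.inter_singleton_of_notMem h2⟩
            · exact ⟨c, hc, Finset.inter_singleton_of_notMem h2⟩
          · rcases hzmem with ⟨h1, _⟩ | ⟨h1, _⟩
            · exact ⟨c, hc, Finset.inter_singleton_of_mem h1⟩
            · exact ⟨c', hc', Finset.inter_singleton_of_mem h1⟩
      have hTcard : T.card = 1 + Δ.card := by
        rw [hT, Finset.card_insert_of_notMem, Finset.card_image_of_injective _
          (fun a b hab => Finset.singleton_injective hab)]
        · ring
        · intro hmem
          obtain ⟨z, _, hz⟩ := Finset.mem_image.1 hmem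
          exact Finset.singleton_ne_empty z hz
      have hΔcard : Δ.card = hdist c c' := rfl
      have h3 : 3 ≤ C.card := by
        have := Finset.card_le_card hTsub
        rw [hTcard] at this
        unfold IsAmple at hC
        omega
      have hnotsub : ¬ C ⊆ {c, c'} := by
        intro hsub
        have := Finset.card_le_card hsub
        have h2 : ({c, c'} : Finset (Finset X)).card ≤ 2 := Finset.card_insert_le _ _ |>.trans (by simp)
        omega
      obtain ⟨w, hw, hwn⟩ := Finset.not_subset.1 hnotsub
      simp only [Finset.mem_insert, Finset.mem_singleton, not_or] at hwn
      refine ⟨w, hw, hwn.1, ?_⟩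
      have hsub : (c \ w) ∪ (w \ c) ⊆ Δ := by
        intro z hz
        by_contra hzΔ
        have := hcase w hw z hzΔ
        simp only [Finset.mem_union, Finset.mem_sdiff] at hz
        tauto
      have hle := Finset.card_le_card hsub
      rcases lt_or_eq_of_le hle with h | h
      · exact h
      · exact absurd (amp_symmdiff_cancel (Finset.eq_of_subset_of_card_le hsub (le_of_eq h.symm))) hwn.2
    · push_neg at hcase
      obtain ⟨d, hdC, z, hzΔ, hzd⟩ := hcase
      set H := C.filter (fun w => z ∈ w ↔ z ∈ c) with hH
      have hHample : IsAmple H := amp_half_ample' hC z (z ∈ c)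
      have hcH : c ∈ H := Finset.mem_filter.2 ⟨hc, Iff.rfl⟩
      have hc'H : c' ∈ H := by
        refine Finset.mem_filter.2 ⟨hc', ?_⟩
        rw [hΔ] at hzΔ
        simp only [Finset.mem_union, Finset.mem_sdiff, not_or] at hzΔ
        by_cases h1 : z ∈ c <;> by_cases h2 : z ∈ c' <;> simp [h1, h2] <;> tauto
      have hdH : d ∉ H := by
        intro hmem
        have := (Finset.mem_filter.1 hmem).2
        rcases hzd with ⟨h1, h2⟩ | ⟨h1, h2⟩ <;> tauto
      have hHlt : H.card < C.card :=
        Finset.card_lt_card ((Finset.ssubset_iff_of_subset (Finset.filter_subset _ _)).2 ⟨d, hdC, hdH⟩)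
      obtain ⟨w, hwH, hw⟩ := ih H (by omega) hHample c hcH c' hc'H hd
      exact ⟨w, Finset.filter_subset _ _ hwH, hw⟩

lemma amp_neighbor_aux : ∀ n (C : Finset (Finset X)), IsAmple C → ∀ c ∈ C, ∀ c' ∈ C,
    c ≠ c' → hdist c c' ≤ n → ∃ u ∈ C, hdist c u = 1 := by
  intro n
  induction n with
  | zero =>
    intro C _ c _ c' _ hne hd
    exact absurd (amp_hdist_eq_zero (Nat.le_zero.1 hd)) hne
  | succ n ih =>
    intro C hC c hc c' hc' hne hd
    by_cases h1 : hdist c c' = 1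
    · exact ⟨c', hc', h1⟩
    · have h2 : 2 ≤ hdist c c' := by
        have : hdist c c' ≠ 0 := fun h => hne (amp_hdist_eq_zero h)
        omega
      obtain ⟨w, hwC, hwne, hwlt⟩ := amp_step_aux C.card C le_rfl hC c hc c' hc' h2
      exact ih C hC c hc w hwC (fun h => hwne h.symm) (by omega)

lemma amp_neighbor {C : Finset (Finset X)} (hC : IsAmple C) {c c' : Finset X}
    (hc : c ∈ C) (hc' : c' ∈ C) (hne : c ≠ c') : ∃ u ∈ C, hdist c u = 1 :=
  amp_neighbor_aux (hdist c c') C hC c hc c' hc' hne le_rfl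

lemma amp_restrictX_eq (C : Finset (Finset X)) (x : X) :
    restrictX C x = C.filter (fun c => x ∉ c)
      ∪ (C.filter (fun c => x ∈ c)).image (fun c => c.erase x) := by
  ext c
  simp only [restrictX, Finset.mem_union, Finset.mem_image, Finset.mem_filter]
  constructor
  · rintro ⟨d, hd, rfl⟩
    by_cases hx : x ∈ d
    · exact Or.inr ⟨d, ⟨hd, hx⟩, rfl⟩
    · refine Or.inl ?_
      rw [Finset.erase_eq_of_notMem hx]
      exact ⟨hd, hx⟩
  · rintro (⟨hc, hx⟩ | ⟨d, ⟨hd, _⟩, rfl⟩)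
    · exact ⟨c, hc, Finset.erase_eq_of_notMem hx⟩
    · exact ⟨d, hd, rfl⟩

lemma amp_reduction_eq (C : Finset (Finset X)) (x : X) :
    reduction C x = C.filter (fun c => x ∉ c)
      ∩ (C.filter (fun c => x ∈ c)).image (fun c => c.erase x) := by
  ext c
  simp only [reduction, Finset.mem_filter, Finset.mem_inter, Finset.mem_image]
  constructor
  · rintro ⟨hc, hx, hins⟩
    exact ⟨⟨hc, hx⟩, insert x c, ⟨hins, Finset.mem_insert_self x c⟩, Finset.erase_insert hx⟩
  · rintro ⟨⟨hc, hx⟩, d, ⟨hd, hxd⟩, rfl⟩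
    exact ⟨hc, hx, by rw [Finset.insert_erase hxd]; exact hd⟩

lemma amp_card_split (C : Finset (Finset X)) (x : X) :
    (restrictX C x).card + (reduction C x).card = C.card := by
  rw [amp_restrictX_eq, amp_reduction_eq]
  have hinj : ((C.filter (fun c => x ∈ c)).image (fun c => c.erase x)).card
      = (C.filter (fun c => x ∈ c)).card := by
    apply Finset.card_image_of_injOn
    intro a ha b hb hab
    have hxa := (Finset.mem_filter.1 ha).2
    have hxb := (Finset.mem_filter.1 hb).2
    rw [← Finset.insert_erase hxa, ← Finset.insert_erase hxb]
    exact congrArg (insert x) hab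
  have h1 := Finset.card_union_add_card_inter (C.filter (fun c => x ∉ c))
    ((C.filter (fun c => x ∈ c)).image (fun c => c.erase x))
  have hsplit : (C.filter (fun c => x ∈ c)).card
      + (C.filter (fun c => x ∉ c)).card = C.card :=
    Finset.card_filter_add_card_filter_not _
  omega

lemma amp_shatters_restrictX {C : Finset (Finset X)} {x : X} {Y : Finset X}
    (h : Shatters (restrictX C x) Y) : x ∉ Y ∧ Shatters C Y := by
  have hxY : x ∉ Y := by
    intro hx
    obtain ⟨c, hcm, hcY⟩ := h Y (Finset.mem_powerset_self Y)
    obtain ⟨d, _, rfl⟩ := Finset.mem_image.1 hcm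
    have : x ∈ d.erase x ∩ Y := by rw [hcY]; exact hx
    exact Finset.notMem_erase x d (Finset.mem_inter.1 this).1
  refine ⟨hxY, ?_⟩
  intro s hs
  obtain ⟨c, hcm, hcY⟩ := h s hs
  obtain ⟨d, hd, rfl⟩ := Finset.mem_image.1 hcm
  refine ⟨d, hd, ?_⟩
  rw [← hcY]
  ext z
  simp only [Finset.mem_inter, Finset.mem_erase]
  constructor
  · rintro ⟨h1, h2⟩
    exact ⟨⟨fun he => hxY (he ▸ h2), h1⟩, h2⟩
  · rintro ⟨⟨_, h2⟩, h3⟩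
    exact ⟨h2, h3⟩

lemma amp_shatters_reduction {C : Finset (Finset X)} {x : X} {Y : Finset X}
    (h : Shatters (reduction C x) Y) : x ∉ Y ∧ Shatters C (insert x Y) := by
  have hxY : x ∉ Y := by
    intro hx
    obtain ⟨c, hcm, hcY⟩ := h Y (Finset.mem_powerset_self Y)
    have hxc := (Finset.mem_filter.1 hcm).2.1
    have : x ∈ c ∩ Y := by rw [hcY]; exact hx
    exact hxc (Finset.mem_inter.1 this).1
  refine ⟨hxY, amp_insert_shatters hxY ?_ ?_⟩
  · intro s hsub
    obtain ⟨c, hcm, hcY⟩ := h s (Finset.mem_powerset.2 hsub)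
    have hm := Finset.mem_filter.1 hcm
    exact ⟨c, ⟨hm.1, hm.2.1⟩, hcY⟩
  · intro s hsub
    obtain ⟨c, hcm, hcY⟩ := h s (Finset.mem_powerset.2 hsub)
    have hm := Finset.mem_filter.1 hcm
    refine ⟨insert x c, ⟨hm.2.2, Finset.mem_insert_self x c⟩, ?_⟩
    rw [Finset.insert_inter_of_notMem hxY, hcY]

lemma amp_red_count (C : Finset (Finset X)) (x : X) :
    (shatteredSets (restrictX C x)).card + (shatteredSets (reduction C x)).card
      ≤ (shatteredSets C).card := by
  set A := shatteredSets (restrictX C x) with hA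
  set B := shatteredSets (reduction C x) with hB
  set J := B.image (insert x) with hJ
  have hAC : A ⊆ shatteredSets C := fun Y hY =>
    amp_mem_shattered.2 (amp_shatters_restrictX (amp_mem_shattered.1 hY)).2
  have hAx : ∀ Y ∈ A, x ∉ Y := fun Y hY =>
    (amp_shatters_restrictX (amp_mem_shattered.1 hY)).1
  have hBx : ∀ Y ∈ B, x ∉ Y := fun Y hY =>
    (amp_shatters_reduction (amp_mem_shattered.1 hY)).1
  have hJC : J ⊆ shatteredSets C := by
    intro Y hY
    obtain ⟨Z, hZ, rfl⟩ := Finset.mem_image.1 hY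
    exact amp_mem_shattered.2 (amp_shatters_reduction (amp_mem_shattered.1 hZ)).2
  have hdisj : Disjoint A J := by
    rw [Finset.disjoint_right]
    intro Y hYJ hYA
    obtain ⟨Z, _, rfl⟩ := Finset.mem_image.1 hYJ
    exact hAx _ hYA (Finset.mem_insert_self x Z)
  have hinj : J.card = B.card := by
    apply Finset.card_image_of_injOn
    intro Y hY Y' hY' hins
    rw [← Finset.erase_insert (hBx Y hY), ← Finset.erase_insert (hBx Y' hY'), hins]
  calc A.card + B.card = A.card + J.card := by rw [hinj]
    _ = (A ∪ J).card := (Finset.card_union_of_disjoint hdisj).symm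
    _ ≤ _ := Finset.card_le_card (Finset.union_subset hAC hJC)

lemma amp_reduction_ample {C : Finset (Finset X)} (hC : IsAmple C) (x : X) :
    IsAmple (reduction C x) := by
  have h1 := amp_pajor (restrictX C x)
  have h2 := amp_pajor (reduction C x)
  have h3 := amp_red_count C x
  have h4 := amp_card_split C x
  unfold IsAmple at hC ⊢
  omega

/-- The multiple reduction `C^Y`. -/
def amp_mred (C : Finset (Finset X)) (Y : Finset X) : Finset (Finset X) :=
  Finset.univ.filter (fun c => c ∩ Y = ∅ ∧ ∀ s ∈ Y.powerset, c ∪ s ∈ C)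

lemma amp_mem_mred {C : Finset (Finset X)} {Y c : Finset X} :
    c ∈ amp_mred C Y ↔ (c ∩ Y = ∅ ∧ ∀ s ∈ Y.powerset, c ∪ s ∈ C) := by
  simp [amp_mred]

lemma amp_mred_empty (C : Finset (Finset X)) : amp_mred C ∅ = C := by
  ext c
  rw [amp_mem_mred]
  simp

lemma amp_mred_insert (C : Finset (Finset X)) {y : X} {Y : Finset X} (hy : y ∉ Y) :
    amp_mred C (insert y Y) = amp_mred (reduction C y) Y := by
  ext c
  rw [amp_mem_mred, amp_mem_mred]
  constructor
  · rintro ⟨h1, h2⟩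
    have hyc : y ∉ c := by
      intro h
      have : y ∈ c ∩ insert y Y := Finset.mem_inter.2 ⟨h, Finset.mem_insert_self _ _⟩
      rw [h1] at this
      exact Finset.notMem_empty _ this
    have hcY : c ∩ Y = ∅ := by
      rw [← Finset.subset_empty, ← h1]
      exact Finset.inter_subset_inter (Finset.Subset.refl c) (Finset.subset_insert y Y)
    refine ⟨hcY, ?_⟩
    intro s hs
    rw [Finset.mem_powerset] at hs
    have hys : y ∉ s := fun h => hy (hs h)
    refine Finset.mem_filter.2 ⟨?_, ?_, ?_⟩
    · exact h2 s (Finset.mem_powerset.2 (hs.trans (Finset.subset_insert y Y)))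
    · rw [Finset.mem_union]
      rintro (h | h)
      · exact hyc h
      · exact hys h
    · have heq : insert y (c ∪ s) = c ∪ insert y s := by rw [Finset.union_insert]
      rw [heq]
      exact h2 (insert y s) (Finset.mem_powerset.2 (Finset.insert_subset_insert y hs))
  · rintro ⟨h1, h2⟩
    have hyc : y ∉ c := by
      have hm := (Finset.mem_filter.1 (h2 ∅ (Finset.empty_mem_powerset Y))).2.1
      simpa using hm
    constructor
    · rw [Finset.inter_insert_of_notMem hyc, h1]
    · intro s hs
      rw [Finset.mem_powerset] at hs
      by_cases hys : y ∈ s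
      · have hsub : s.erase y ⊆ Y := by
          intro z hz
          rcases Finset.mem_insert.1 (hs (Finset.mem_erase.1 hz).2) with h | h
          · exact absurd h (Finset.mem_erase.1 hz).1
          · exact h
        have hm := Finset.mem_filter.1 (h2 (s.erase y) (Finset.mem_powerset.2 hsub))
        have heq : c ∪ s = insert y (c ∪ s.erase y) := by
          conv_lhs => rw [← Finset.insert_erase hys]
          rw [Finset.union_insert]
        rw [heq]
        exact hm.2.2
      · have hsub : s ⊆ Y := by
          intro z hz
          rcases Finset.mem_insert.1 (hs hz) with h | h
          · subst h; exact absurd hz hys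
          · exact h
        exact (Finset.mem_filter.1 (h2 s (Finset.mem_powerset.2 hsub))).1

lemma amp_mred_ample : ∀ (Y : Finset X) (C : Finset (Finset X)),
    IsAmple C → IsAmple (amp_mred C Y) := by
  intro Y
  induction Y using Finset.induction_on with
  | empty => intro C h; rwa [amp_mred_empty]
  | @insert y Y hy ih =>
    intro C h
    rw [amp_mred_insert C hy]
    exact ih _ (amp_reduction_ample h y)

lemma amp_flip {t u : Finset X} {x : X} (h : (t \ u) ∪ (u \ t) = {x}) :
    (x ∈ t ∧ x ∉ u ∧ u = t.erase x) ∨ (x ∉ t ∧ x ∈ u ∧ u = insert x t) := by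
  have hmem := Finset.ext_iff.1 h
  simp only [Finset.mem_union, Finset.mem_sdiff, Finset.mem_singleton] at hmem
  have hx := (hmem x).2 rfl
  rcases hx with ⟨hxt, hxu⟩ | ⟨hxu, hxt⟩
  · refine Or.inl ⟨hxt, hxu, ?_⟩
    ext z
    rw [Finset.mem_erase]
    by_cases hzx : z = x
    · subst hzx; simp [hxu]
    · have hz := hmem z
      constructor
      · intro hzu
        refine ⟨hzx, ?_⟩
        by_contra hzt
        exact hzx (hz.1 (Or.inr ⟨hzu, hzt⟩))
      · rintro ⟨_, hzt⟩
        by_contra hzu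
        exact hzx (hz.1 (Or.inl ⟨hzt, hzu⟩))
  · refine Or.inr ⟨hxt, hxu, ?_⟩
    ext z
    rw [Finset.mem_insert]
    by_cases hzx : z = x
    · subst hzx; simp [hxu]
    · have hz := hmem z
      constructor
      · intro hzu
        right
        by_contra hzt
        exact hzx (hz.1 (Or.inr ⟨hzu, hzt⟩))
      · rintro (rfl | hzt)
        · exact hxu
        · by_contra hzu
          exact hzx (hz.1 (Or.inl ⟨hzt, hzu⟩))

end AmpAux

/-- Two maximal cubes of an ample class with the same support are equal. -/
theorem stmt_1 (C B B' : Finset (Finset X)) (Y : Finset X) (hC : IsAmple C)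
    (hB : IsMaximalCubeOf C B) (hB' : IsMaximalCubeOf C B')
    (hBY : IsCubeS B Y) (hB'Y : IsCubeS B' Y) : B = B' := by
  obtain ⟨t, ht0, htB⟩ := hBY
  obtain ⟨t', ht0', htB'⟩ := hB'Y
  by_contra hne
  have htt : t ≠ t' := by rintro rfl; exact hne (htB.trans htB'.symm)
  have htD : t ∈ amp_mred C Y := by
    rw [amp_mem_mred]
    refine ⟨ht0, fun s hs => ?_⟩
    exact hB.1.1 (htB ▸ Finset.mem_image.2 ⟨s, hs, rfl⟩)
  have ht'D : t' ∈ amp_mred C Y := by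
    rw [amp_mem_mred]
    refine ⟨ht0', fun s hs => ?_⟩
    exact hB'.1.1 (htB' ▸ Finset.mem_image.2 ⟨s, hs, rfl⟩)
  have hamp := amp_mred_ample Y C hC
  obtain ⟨u, huD, hu1⟩ := amp_neighbor hamp htD ht'D htt
  unfold hdist at hu1
  rw [Finset.card_eq_one] at hu1
  obtain ⟨x, hx⟩ := hu1
  rw [amp_mem_mred] at huD htD
  have hCt : ∀ s ⊆ Y, t ∪ s ∈ C := fun s hs => htD.2 s (Finset.mem_powerset.2 hs)
  have hCu : ∀ s ⊆ Y, u ∪ s ∈ C := fun s hs => huD.2 s (Finset.mem_powerset.2 hs)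
  have hxY : x ∉ Y := by
    intro hxY
    rcases amp_flip hx with ⟨hxt, _, _⟩ | ⟨_, hxu, _⟩
    · have : x ∈ t ∩ Y := Finset.mem_inter.2 ⟨hxt, hxY⟩
      rw [htD.1] at this
      exact Finset.notMem_empty _ this
    · have : x ∈ u ∩ Y := Finset.mem_inter.2 ⟨hxu, hxY⟩
      rw [huD.1] at this
      exact Finset.notMem_empty _ this
  have herase : ∀ s, x ∈ s → s ⊆ insert x Y → s.erase x ⊆ Y := by
    intro s _ hsub z hz
    rcases Finset.mem_insert.1 (hsub (Finset.mem_erase.1 hz).2) with h | h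
    · exact absurd h (Finset.mem_erase.1 hz).1
    · exact h
  have hkey : ∀ s ⊆ insert x Y, t.erase x ∪ s ∈ C := by
    intro s hs
    rcases amp_flip hx with ⟨hxt, hxu, hu⟩ | ⟨hxt, hxu, hu⟩
    · by_cases hxs : x ∈ s
      · have h1 : t ∪ s.erase x ∈ C := hCt _ (herase s hxs hs)
        have heq : t.erase x ∪ s = t ∪ s.erase x := by
          ext z
          by_cases hzx : z = x <;> simp [hzx, hxt, hxs, Finset.mem_union, Finset.mem_erase] <;> tauto
        rw [heq]; exact h1
      · have hsub : s ⊆ Y := by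
          intro z hz
          rcases Finset.mem_insert.1 (hs hz) with h | h
          · subst h; exact absurd hz hxs
          · exact h
        rw [← hu]
        exact hCu _ hsub
    · have ht0t : t.erase x = t := Finset.erase_eq_of_notMem hxt
      by_cases hxs : x ∈ s
      · have h1 : u ∪ s.erase x ∈ C := hCu _ (herase s hxs hs)
        have heq : t.erase x ∪ s = u ∪ s.erase x := by
          rw [ht0t, hu]
          ext z
          by_cases hzx : z = x <;>
            simp [hzx, hxs, Finset.mem_union, Finset.mem_erase, Finset.mem_insert] <;> tauto
        rw [heq]; exact h1
      · have hsub : s ⊆ Y := by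
          intro z hz
          rcases Finset.mem_insert.1 (hs hz) with h | h
          · subst h; exact absurd hz hxs
          · exact h
        rw [ht0t]
        exact hCt _ hsub
  have hcube : IsCubeOf C ((insert x Y).powerset.image (fun s => t.erase x ∪ s)) := by
    constructor
    · intro b hb
      obtain ⟨s, hs, rfl⟩ := Finset.mem_image.1 hb
      exact hkey s (Finset.mem_powerset.1 hs)
    · refine ⟨insert x Y, t.erase x, ?_, rfl⟩
      apply Finset.eq_empty_of_forall_notMem
      intro z hz
      rcases Finset.mem_inter.1 hz with ⟨hz1, hz2⟩
      rcases Finset.mem_insert.1 hz2 with rfl | hz2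
      · exact (Finset.mem_erase.1 hz1).1 rfl
      · have : z ∈ t ∩ Y := Finset.mem_inter.2 ⟨(Finset.mem_erase.1 hz1).2, hz2⟩
        rw [htD.1] at this
        exact Finset.notMem_empty _ this
  have hsub : B ⊆ (insert x Y).powerset.image (fun s => t.erase x ∪ s) := by
    rw [htB]
    intro b hb
    obtain ⟨s, hs, rfl⟩ := Finset.mem_image.1 hb
    rw [Finset.mem_powerset] at hs
    by_cases hxt : x ∈ t
    · refine Finset.mem_image.2 ⟨insert x s,
        Finset.mem_powerset.2 (Finset.insert_subset_insert x hs), ?_⟩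
      ext z
      by_cases hzx : z = x <;>
        simp [hzx, hxt, Finset.mem_union, Finset.mem_erase, Finset.mem_insert] <;> tauto
    · refine Finset.mem_image.2 ⟨s,
        Finset.mem_powerset.2 (hs.trans (Finset.subset_insert x Y)), ?_⟩
      rw [Finset.erase_eq_of_notMem hxt]
  have heqB : B = (insert x Y).powerset.image (fun s => t.erase x ∪ s) :=
    hB.2 _ hcube hsub
  have huB : u ∈ B := by
    rw [heqB]
    rcases amp_flip hx with ⟨hxt, hxu, hu⟩ | ⟨hxt, hxu, hu⟩
    · refine Finset.mem_image.2 ⟨∅, Finset.empty_mem_powerset _, ?_⟩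
      rw [Finset.union_empty, ← hu]
    · refine Finset.mem_image.2 ⟨{x}, ?_, ?_⟩
      · rw [Finset.mem_powerset, Finset.singleton_subset_iff]
        exact Finset.mem_insert_self _ _
      · rw [Finset.erase_eq_of_notMem hxt, hu]
        ext z
        simp [Finset.mem_union, Finset.mem_insert, Finset.mem_singleton, or_comm]
  rw [htB] at huB
  obtain ⟨s, hs, hus⟩ := Finset.mem_image.1 huB
  rw [Finset.mem_powerset] at hs
  rcases amp_flip hx with ⟨hxt, hxu, hu⟩ | ⟨hxt, hxu, hu⟩
  · exact hxu (hus ▸ Finset.mem_union_left s hxt)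
  · have hxts : x ∈ t ∪ s := by rw [hus]; exact hxu
    rcases Finset.mem_union.1 hxts with h | h
    · exact hxt h
    · exact hxY (hs h)
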